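/- Let E be an m-dimensional linear subspace of ℝ^n (n = m + k), let v_1,…,v_m ∈ E, and let L ≤ 1 be a positive constant. If |v_j − (e_j, 0)| ≤ L/(3√m) for all j ∈ {1,…,m}, where (e_j,0) denotes the j-th standard basis vector of ℝ^m × {0} ⊂ ℝ^m × ℝ^k, then E is a graph over ℝ^m × {0}: there exists a matrix A = (a_1,…,a_m) ∈ ℝ^{k×m} such that E = span{(e_1,a_1),…,(e_m,a_m)}. -/

import Mathlib

/-- The Euclidean (L²) product space ℝ^m × ℝ^k. -/
noncomputable abbrev ProdSp (m k : ℕ) :=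
  WithLp 2 (EuclideanSpace ℝ (Fin m) × EuclideanSpace ℝ (Fin k))

/-- The point (x, a) ∈ ℝ^m × ℝ^k. -/
noncomputable def mk2 {m k : ℕ} (x : EuclideanSpace ℝ (Fin m)) (a : EuclideanSpace ℝ (Fin k)) :
    ProdSp m k := (WithLp.equiv 2 _).symm (x, a)

lemma sum_abs_le_sqrt_mul_norm {m : ℕ} (c : EuclideanSpace ℝ (Fin m)) :
    ∑ j, |c j| ≤ Real.sqrt m * ‖c‖ := by
  have hs := sq_sum_le_card_mul_sum_sq (s := (Finset.univ : Finset (Fin m))) (f := fun j => |c j|)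
  have hn : ‖c‖^2 = ∑ j, |c j|^2 := by
    rw [EuclideanSpace.norm_eq, Real.sq_sqrt (by positivity)]
    simp [Real.norm_eq_abs, sq_abs]
  simp only [Finset.card_univ, Fintype.card_fin] at hs
  rw [← hn] at hs
  have hsm : Real.sqrt m ^ 2 = (m : ℝ) := Real.sq_sqrt (by positivity)
  have h0 : (0:ℝ) ≤ ∑ j, |c j| := Finset.sum_nonneg fun j _ => abs_nonneg _
  nlinarith [norm_nonneg c, Real.sqrt_nonneg (m:ℝ),
    mul_nonneg (Real.sqrt_nonneg (m:ℝ)) (norm_nonneg c)]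

lemma basis_sum {m : ℕ} (c : EuclideanSpace ℝ (Fin m)) :
    c = ∑ j, c j • EuclideanSpace.single j 1 := by
  ext i
  rw [WithLp.ofLp_sum, Finset.sum_apply]
  simp [EuclideanSpace.single_apply, PiLp.smul_apply]


/-- If an m-dimensional subspace E of ℝ^m × ℝ^k contains points v_j with
|v_j − (e_j, 0)| ≤ L/(3√m) for a positive constant L ≤ 1, then E is a graph over
ℝ^m × {0}: E = span{(e_1,a_1),…,(e_m,a_m)} for some a_j ∈ ℝ^k. -/
theorem stmt0 {m k : ℕ} (E : Submodule ℝ (ProdSp m k))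
    (hE : Module.finrank ℝ E = m)
    (v : Fin m → ProdSp m k) (hv : ∀ j, v j ∈ E)
    (L : ℝ) (hL0 : 0 < L) (hL1 : L ≤ 1)
    (hclose : ∀ j, ‖v j - mk2 (EuclideanSpace.single j 1) 0‖ ≤ L / (3 * Real.sqrt m)) :
    ∃ a : Fin m → EuclideanSpace ℝ (Fin k),
      E = Submodule.span ℝ (Set.range fun j => mk2 (EuclideanSpace.single j 1) (a j)) := by
  classical
  haveI : FiniteDimensional ℝ (ProdSp m k) :=
    Module.Finite.equiv (WithLp.linearEquiv 2 ℝ _).symm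
  set e : Fin m → EuclideanSpace ℝ (Fin m) := fun j => EuclideanSpace.single j 1 with he
  -- the projection
  let P : ProdSp m k →ₗ[ℝ] EuclideanSpace ℝ (Fin m) :=
    (LinearMap.fst ℝ _ _).comp (WithLp.linearEquiv 2 ℝ _).toLinearMap
  have hP : ∀ w : ProdSp m k, P w = w.fst := fun _ => rfl
  have hPle : ∀ w : ProdSp m k, ‖P w‖ ≤ ‖w‖ := by
    intro w
    have h := WithLp.prod_norm_sq_eq_of_L2 w
    rw [hP]
    nlinarith [norm_nonneg w, norm_nonneg w.fst, norm_nonneg w.snd, sq_nonneg ‖w.snd‖]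
  -- the map c ↦ ∑ c_j v_j
  let g : EuclideanSpace ℝ (Fin m) →ₗ[ℝ] ProdSp m k :=
    { toFun := fun c => ∑ j, c j • v j
      map_add' := by intro x y; simp [add_smul, Finset.sum_add_distrib]
      map_smul' := by intro r x; simp [smul_smul, Finset.smul_sum] }
  let f : EuclideanSpace ℝ (Fin m) →ₗ[ℝ] EuclideanSpace ℝ (Fin m) := P.comp g
  -- component bound
  have hPv : ∀ j, ‖P (v j) - e j‖ ≤ L / (3 * Real.sqrt m) := by
    intro j
    have : P (v j) - e j = P (v j - mk2 (e j) 0) := by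
      rw [map_sub]; rfl
    rw [this]
    exact (hPle _).trans (hclose j)
  -- key estimate
  have key : ∀ c : EuclideanSpace ℝ (Fin m), ‖f c - c‖ ≤ L / 3 * ‖c‖ := by
    intro c
    have hfc : f c - c = ∑ j, c j • (P (v j) - e j) := by
      have h1 : f c = ∑ j, c j • P (v j) := by
        simp only [f, g, LinearMap.comp_apply, LinearMap.coe_mk, AddHom.coe_mk]
        rw [map_sum]
        simp [map_smul]
      rw [h1]
      nth_rewrite 2 [basis_sum c]
      rw [← Finset.sum_sub_distrib]
      simp [smul_sub, he]
    rw [hfc]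
    calc ‖∑ j, c j • (P (v j) - e j)‖ ≤ ∑ j, ‖c j • (P (v j) - e j)‖ :=
          norm_sum_le _ _
      _ = ∑ j, |c j| * ‖P (v j) - e j‖ := by simp [norm_smul, Real.norm_eq_abs]
      _ ≤ ∑ j, |c j| * (L / (3 * Real.sqrt m)) := by
          apply Finset.sum_le_sum
          intro j _
          exact mul_le_mul_of_nonneg_left (hPv j) (abs_nonneg _)
      _ = (∑ j, |c j|) * (L / (3 * Real.sqrt m)) := by rw [Finset.sum_mul]
      _ ≤ (Real.sqrt m * ‖c‖) * (L / (3 * Real.sqrt m)) := by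
          apply mul_le_mul_of_nonneg_right (sum_abs_le_sqrt_mul_norm c)
          positivity
      _ ≤ L / 3 * ‖c‖ := by
          rcases eq_or_ne (Real.sqrt m) 0 with h | h
          · rw [h]; simp; positivity
          · have : (Real.sqrt m * ‖c‖) * (L / (3 * Real.sqrt m)) = L / 3 * ‖c‖ := by
              field_simp
            rw [this]
  -- f injective, hence bijective
  have hfinj : Function.Injective f := by
    rw [← LinearMap.ker_eq_bot, LinearMap.ker_eq_bot']
    intro c hc
    by_contra hc0
    have h1 : ‖f c - c‖ = ‖c‖ := by rw [hc]; simp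
    have h2 := key c
    rw [h1] at h2
    have h3 : 0 < ‖c‖ := norm_pos_iff.mpr hc0
    nlinarith
  have hfsurj : Function.Surjective f := (LinearMap.injective_iff_surjective).mp hfinj
  let fE := LinearEquiv.ofBijective f ⟨hfinj, hfsurj⟩
  -- g injective
  have hginj : Function.Injective g := by
    have : (⇑P ∘ ⇑g) = ⇑f := by rw [← LinearMap.coe_comp]
    exact Function.Injective.of_comp (f := ⇑P) (this ▸ hfinj)
  -- range g = E
  have hrange_le : LinearMap.range g ≤ E := by
    rintro _ ⟨c, rfl⟩
    show (∑ j, c j • v j) ∈ E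
    exact Submodule.sum_mem _ fun j _ => Submodule.smul_mem _ _ (hv j)
  have hrank : Module.finrank ℝ (LinearMap.range g) = m := by
    rw [LinearMap.finrank_range_of_inj hginj, finrank_euclideanSpace_fin]
  -- the graph vectors
  set u : Fin m → ProdSp m k := fun j => g (fE.symm (e j)) with hu
  have huE : ∀ j, u j ∈ E := fun j => hrange_le ⟨_, rfl⟩
  have hPu : ∀ j, P (u j) = e j := by
    intro j
    have : f (fE.symm (e j)) = e j := fE.apply_symm_apply (e j)
    exact this
  set a : Fin m → EuclideanSpace ℝ (Fin k) := fun j => (u j).snd with ha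
  have humk : ∀ j, mk2 (e j) (a j) = u j := by
    intro j
    rw [← hPu j]
    rfl
  -- u linearly independent
  have hli : LinearIndependent ℝ u := by
    have hb := (EuclideanSpace.basisFun (Fin m) ℝ).toBasis.linearIndependent
    have h2 := hb.map' (g.comp fE.symm.toLinearMap)
      (LinearMap.ker_eq_bot.mpr (hginj.comp fE.symm.injective))
    have : u = ⇑(g.comp fE.symm.toLinearMap) ∘ ⇑(EuclideanSpace.basisFun (Fin m) ℝ).toBasis := by
      funext j
      simp [hu, EuclideanSpace.basisFun_apply, he]
    rw [this]
    exact h2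
  have hspan_le : Submodule.span ℝ (Set.range u) ≤ E := by
    rw [Submodule.span_le]
    rintro _ ⟨j, rfl⟩
    exact huE j
  have hspan_rank : Module.finrank ℝ (Submodule.span ℝ (Set.range u)) = m := by
    rw [finrank_span_eq_card hli, Fintype.card_fin]
  have hEspan : Submodule.span ℝ (Set.range u) = E :=
    Submodule.eq_of_le_of_finrank_le hspan_le (by rw [hE, hspan_rank])
  refine ⟨a, ?_⟩
  have hfun : (fun j => mk2 (e j) (a j)) = u := funext humk
  rw [show (Set.range fun j => mk2 (e j) (a j)) = Set.range u from congrArg Set.range hfun,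
    hEspan]
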